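/- Let G₁ and G₂ be FGGs. If G₂ is nonrecursive, then the conjunction G₁ ⊓ G₂ is nonrecursive. -/

import Mathlib

open scoped ENNReal Classical

structure Fragment (LV LE : Type) (htype : LE → List LV) where
  V : Finset ℕ
  E : Finset ℕ
  att : ℕ → List ℕ
  labV : ℕ → LV
  labE : ℕ → LE
  ext : List ℕ
  att_mem : ∀ e ∈ E, ∀ v ∈ att e, v ∈ V
  wt : ∀ e ∈ E, (att e).map labV = htype (labE e)
  ext_mem : ∀ v ∈ ext, v ∈ V

structure HRG (LV LE : Type) (htype : LE → List LV) where
  N : Set LE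
  T : Set LE
  finN : N.Finite
  finT : T.Finite
  disj : Disjoint N T
  P : Type
  finP : Finite P
  lhs : P → LE
  lhs_mem : ∀ π, lhs π ∈ N
  rhs : P → Fragment LV LE htype
  rhs_lab : ∀ π, ∀ e ∈ (rhs π).E, (rhs π).labE e ∈ N ∪ T
  rhs_ext : ∀ π, ((rhs π).ext).map (rhs π).labV = htype (lhs π)
  S : LE
  S_mem : S ∈ N
  S_type : htype S = []

variable {LV LE : Type} {htype : LE → List LV}

inductive Deriv (G : HRG LV LE htype) : LE → Type
  | node (π : G.P)
      (children : ∀ e, e ∈ (G.rhs π).E → (G.rhs π).labE e ∈ G.N →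
        Deriv G ((G.rhs π).labE e)) :
      Deriv G (G.lhs π)

structure AHyper (LV LE : Type) (htype : LE → List LV) where
  V : Type
  E : Type
  finV : Finite V
  finE : Finite E
  att : E → List V
  labV : V → LV
  labE : E → LE
  wt : ∀ e, (att e).map labV = htype (labE e)
  ext : List V

/-- Mapping a function over a `pmap` is an ordinary `map` when the result is
proof-irrelevant. -/
theorem List.map_pmap_eq_map {α β γ : Type*} {p : α → Prop} (l : List α)
    (H : ∀ a ∈ l, p a) (f : ∀ a, p a → β) (g : β → γ) (g' : α → γ)
    (hfg : ∀ a ha, g (f a ha) = g' a) : (l.pmap f H).map g = l.map g' := by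
  induction l with
  | nil => simp
  | cons a l ih =>
      simp only [List.pmap, List.map_cons, hfg]
      exact congrArg _ (ih (fun x hx => H x (List.mem_cons_of_mem _ hx)))

namespace Fragment

variable (R : Fragment LV LE htype) (NT : Set LE)
  (child : ∀ e, e ∈ R.E → R.labE e ∈ NT → AHyper LV LE htype)
  (hchild : ∀ e he hn, ((child e he hn).ext).map (child e he hn).labV = htype (R.labE e))

/-- Replacement of the `NT`-labeled edges of `R` by the given hypergraphs,
identifying the `i`-th endpoint of each replaced edge with the `i`-th external
node of the corresponding replacement graph. -/
noncomputable def replace : AHyper LV LE htype :=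
  letI C : ∀ _p : {e : ℕ // e ∈ R.E ∧ R.labE e ∈ NT}, AHyper LV LE htype :=
    fun p => child p.1 p.2.1 p.2.2
  letI V0 : Type := {v : ℕ // v ∈ R.V} ⊕ Σ p : {e : ℕ // e ∈ R.E ∧ R.labE e ∈ NT}, (C p).V
  letI rel : V0 → V0 → Prop := fun a b =>
    ∃ (p : {e : ℕ // e ∈ R.E ∧ R.labE e ∈ NT}) (i : ℕ)
      (hi : i < (R.att p.1).length) (hv : (R.att p.1).get ⟨i, hi⟩ ∈ R.V)
      (hj : i < (C p).ext.length),
      a = Sum.inl ⟨(R.att p.1).get ⟨i, hi⟩, hv⟩ ∧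
      b = Sum.inr ⟨p, (C p).ext.get ⟨i, hj⟩⟩
  { V := Quot rel
    E := {e : ℕ // e ∈ R.E ∧ R.labE e ∉ NT} ⊕
      Σ p : {e : ℕ // e ∈ R.E ∧ R.labE e ∈ NT}, (C p).E
    finV := by
      haveI : ∀ p : {e : ℕ // e ∈ R.E ∧ R.labE e ∈ NT}, Finite (C p).V :=
        fun p => (C p).finV
      haveI : Finite {e : ℕ // e ∈ R.E ∧ R.labE e ∈ NT} :=
        (R.E.finite_toSet.subset (fun e he => he.1)).to_subtype
      haveI : Finite V0 := by infer_instance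
      exact Finite.of_surjective (Quot.mk rel) (fun q => Quot.exists_rep q)
    finE := by
      haveI : ∀ p : {e : ℕ // e ∈ R.E ∧ R.labE e ∈ NT}, Finite (C p).E :=
        fun p => (C p).finE
      haveI : Finite {e : ℕ // e ∈ R.E ∧ R.labE e ∈ NT} :=
        (R.E.finite_toSet.subset (fun e he => he.1)).to_subtype
      haveI : Finite {e : ℕ // e ∈ R.E ∧ R.labE e ∉ NT} :=
        (R.E.finite_toSet.subset (fun e he => he.1)).to_subtype
      infer_instance
    att := fun e => match e with
      | Sum.inl q => (R.att q.1).pmap (fun v h => Quot.mk rel (Sum.inl ⟨v, h⟩))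
          (R.att_mem q.1 q.2.1)
      | Sum.inr q => ((C q.1).att q.2).map (fun v => Quot.mk rel (Sum.inr ⟨q.1, v⟩))
    labV := Quot.lift (Sum.elim (fun v => R.labV v.1) (fun q => (C q.1).labV q.2)) (by
      rintro a b ⟨p, i, hi, hv, hj, rfl, rfl⟩
      simp only [Sum.elim_inl, Sum.elim_inr, List.get_eq_getElem]
      have h1 : ((R.att p.1).map R.labV)[i]? = (htype (R.labE p.1))[i]? := by
        rw [R.wt p.1 p.2.1]
      have h2 : ((C p).ext.map (C p).labV)[i]? = (htype (R.labE p.1))[i]? := by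
        rw [hchild p.1 p.2.1 p.2.2]
      rw [List.getElem?_map, List.getElem?_eq_getElem hi] at h1
      rw [List.getElem?_map, List.getElem?_eq_getElem hj] at h2
      exact Option.some.inj (h1.trans h2.symm))
    labE := fun e => match e with
      | Sum.inl q => R.labE q.1
      | Sum.inr q => (C q.1).labE q.2
    wt := by
      rintro (q | q)
      · dsimp only
        rw [← R.wt q.1 q.2.1]
        exact List.map_pmap_eq_map _ _ _ _ _ (fun a ha => rfl)
      · dsimp only
        simp only [List.map_map]
        exact (C q.1).wt q.2
    ext := R.ext.pmap (fun v h => Quot.mk rel (Sum.inl ⟨v, h⟩)) R.ext_mem }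

theorem replace_ext_map :
    ((R.replace NT child hchild).ext).map (R.replace NT child hchild).labV =
      R.ext.map R.labV := by
  simp only [replace]
  exact List.map_pmap_eq_map _ _ _ _ _ (fun a ha => rfl)

end Fragment

/-- The derived graph of a derivation tree, together with the fact that the
labels of its external nodes agree with the type of the derived nonterminal. -/
noncomputable def HRG.deriveA (G : HRG LV LE htype) :
    ∀ {X : LE}, Deriv G X → {H : AHyper LV LE htype // H.ext.map H.labV = htype X}
  | _, .node π c =>
      ⟨Fragment.replace (G.rhs π) G.N (fun e he hn => (G.deriveA (c e he hn)).1)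
          (fun e he hn => (G.deriveA (c e he hn)).2),
        by rw [Fragment.replace_ext_map]; exact G.rhs_ext π⟩

/-- The derived graph of a derivation tree. -/
noncomputable def HRG.derive (G : HRG LV LE htype) {X : LE} (D : Deriv G X) :
    AHyper LV LE htype :=
  (G.deriveA D).1

/-- A factor graph grammar: an HRG together with domains for the node labels
and factor functions for the (terminal) edge labels. -/
structure FGG (LV LE : Type) (htype : LE → List LV) (W : Type)
    extends HRG LV LE htype where
  Ω : LV → Set W
  F : LE → List W → NNReal

variable {W : Type}

/-- Assignments of a hypergraph: maps from nodes to values in the domains. -/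
def AHyper.Assign (Ω : LV → Set W) (H : AHyper LV LE htype) : Type :=
  {ξ : H.V → W // ∀ v, ξ v ∈ Ω (H.labV v)}

/-- The weight of an assignment: the product, over all terminal-labeled
hyperedges, of the factor function applied to the values at the endpoints. -/
noncomputable def AHyper.weight (Tset : Set LE) (F : LE → List W → NNReal)
    (H : AHyper LV LE htype) (ξ : H.V → W) : ℝ≥0∞ :=
  ∏ᶠ e : {e : H.E // H.labE e ∈ Tset},
    (F (H.labE e.1) ((H.att e.1).map ξ) : ℝ≥0∞)

/-- The sum–product of a factor graph grammar. -/
noncomputable def FGG.Z (G : FGG LV LE htype W) : ℝ≥0∞ :=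
  ∑' D : Deriv G.toHRG G.S,
    ∑' ξ : (G.toHRG.derive D).Assign G.Ω,
      (G.toHRG.derive D).weight G.T G.F ξ.1

/-- Assignments of the nodes of a fragment. -/
def Fragment.Assign (Ω : LV → Set W) (R : Fragment LV LE htype) : Type :=
  {ξ : {v : ℕ // v ∈ R.V} → W // ∀ v, ξ v ∈ Ω (R.labV v.1)}

/-- The values of an assignment at the external nodes of a fragment. -/
def Fragment.extVals (R : Fragment LV LE htype) (ξ : {v : ℕ // v ∈ R.V} → W) :
    List W :=
  R.ext.pmap (fun v h => ξ ⟨v, h⟩) R.ext_mem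

/-- The values of an assignment at the endpoints of an edge of a fragment. -/
def Fragment.attVals (R : Fragment LV LE htype) (ξ : {v : ℕ // v ∈ R.V} → W)
    (e : ℕ) (he : e ∈ R.E) : List W :=
  (R.att e).pmap (fun v h => ξ ⟨v, h⟩) (R.att_mem e he)

/-- The monotone operator, on `[0,∞]`-valued families `ψ_X(ξ)` indexed by
edge labels `X` and assignments `ξ` to the endpoints of `X`, whose defining
equations are
`ψ_X(ξ) = Σ_{(X→R) ∈ P} Σ_{ξ' : assignment of R with ξ'(ext_R) = ξ}
  (Π_{terminal e ∈ R} F(lab(e))(ξ'(att e))) · (Π_{nonterminal e ∈ R} ψ_{lab(e)}(ξ'(att e)))`. -/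
noncomputable def FGG.sysOp (G : FGG LV LE htype W) :
    (LE → List W → ℝ≥0∞) → (LE → List W → ℝ≥0∞) := fun ψ X ξ =>
  ∑' π : {π : G.P // G.lhs π = X},
    ∑' ξ' : {ξ' : (G.rhs π.1).Assign G.Ω // (G.rhs π.1).extVals ξ'.1 = ξ},
      (∏ᶠ e : {e : ℕ // e ∈ (G.rhs π.1).E ∧ (G.rhs π.1).labE e ∈ G.T},
          (G.F ((G.rhs π.1).labE e.1)
            ((G.rhs π.1).attVals ξ'.1.1 e.1 e.2.1) : ℝ≥0∞)) *
      (∏ᶠ e : {e : ℕ // e ∈ (G.rhs π.1).E ∧ (G.rhs π.1).labE e ∈ G.N},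
          ψ ((G.rhs π.1).labE e.1) ((G.rhs π.1).attVals ξ'.1.1 e.1 e.2.1))

/-! ### Conjunction of FGGs -/

/-- Edge labels of the conjunction of two FGGs: tagged terminal labels from
either grammar, and pairs of nonterminal labels. -/
def CLab (LE : Type) : Type := (LE ⊕ LE) ⊕ LE × LE

/-- Types of the edge labels of a conjunction. -/
def chtype (htype : LE → List LV) : CLab LE → List LV := fun ℓ =>
  match ℓ with
  | .inl (.inl t) => htype t
  | .inl (.inr t) => htype t
  | .inr p => htype p.1

/-- Two right-hand sides are conjoinable (with respect to nonterminal sets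
`N₁`, `N₂`) if they share the same nodes, node labels, external nodes, and
nonterminal edges with the same attachments and with nonterminal labels of
equal types, differing only in their terminal edges. -/
structure Conjoinable (N₁ N₂ : Set LE) (R₁ R₂ : Fragment LV LE htype) : Prop where
  hV : R₁.V = R₂.V
  hlabV : ∀ v ∈ R₁.V, R₁.labV v = R₂.labV v
  hext : R₁.ext = R₂.ext
  hNT : ∀ e : ℕ, (e ∈ R₁.E ∧ R₁.labE e ∈ N₁) ↔ (e ∈ R₂.E ∧ R₂.labE e ∈ N₂)
  hatt : ∀ e ∈ R₁.E, R₁.labE e ∈ N₁ → R₁.att e = R₂.att e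
  htyp : ∀ e ∈ R₁.E, R₁.labE e ∈ N₁ → htype (R₂.labE e) = htype (R₁.labE e)

/-- The edge names of the conjunction of two conjoinable right-hand sides:
the shared nonterminal edges together with the disjoint union of the
terminal edges of both sides. -/
noncomputable def conjE (N₁ N₂ : Set LE) (R₁ R₂ : Fragment LV LE htype) :
    Finset ℕ :=
  ((R₁.E.filter fun e => R₁.labE e ∈ N₁).image fun e => 3 * e) ∪
  ((R₁.E.filter fun e => R₁.labE e ∉ N₁).image fun e => 3 * e + 1) ∪
  ((R₂.E.filter fun e => R₂.labE e ∉ N₂).image fun e => 3 * e + 2)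

theorem mem_conjE {N₁ N₂ : Set LE} {R₁ R₂ : Fragment LV LE htype} {e : ℕ}
    (he : e ∈ conjE N₁ N₂ R₁ R₂) :
    (∃ m, e = 3 * m ∧ m ∈ R₁.E ∧ R₁.labE m ∈ N₁) ∨
    (∃ m, e = 3 * m + 1 ∧ m ∈ R₁.E ∧ R₁.labE m ∉ N₁) ∨
    (∃ m, e = 3 * m + 2 ∧ m ∈ R₂.E ∧ R₂.labE m ∉ N₂) := by
  simp only [conjE, Finset.mem_union, Finset.mem_image, Finset.mem_filter] at he
  rcases he with (⟨m, ⟨h1, h2⟩, rfl⟩ | ⟨m, ⟨h1, h2⟩, rfl⟩) | ⟨m, ⟨h1, h2⟩, rfl⟩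
  · exact Or.inl ⟨m, rfl, h1, h2⟩
  · exact Or.inr (Or.inl ⟨m, rfl, h1, h2⟩)
  · exact Or.inr (Or.inr ⟨m, rfl, h1, h2⟩)

/-- The conjunction of two conjoinable right-hand sides. -/
noncomputable def conjFrag (N₁ N₂ : Set LE) (R₁ R₂ : Fragment LV LE htype)
    (hc : Conjoinable N₁ N₂ R₁ R₂) : Fragment LV (CLab LE) (chtype htype) where
  V := R₁.V
  E := conjE N₁ N₂ R₁ R₂
  att e := if e % 3 = 0 then R₁.att (e / 3)
    else if e % 3 = 1 then R₁.att (e / 3) else R₂.att (e / 3)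
  labV := R₁.labV
  labE e := if e % 3 = 0 then Sum.inr (R₁.labE (e / 3), R₂.labE (e / 3))
    else if e % 3 = 1 then Sum.inl (Sum.inl (R₁.labE (e / 3)))
    else Sum.inl (Sum.inr (R₂.labE (e / 3)))
  ext := R₁.ext
  att_mem := by
    intro e he v hv
    rcases mem_conjE he with ⟨m, rfl, h1, h2⟩ | ⟨m, rfl, h1, h2⟩ | ⟨m, rfl, h1, h2⟩
    · have e0 : (3 * m) % 3 = 0 := by omega
      have e3 : (3 * m) / 3 = m := by omega
      simp only [e0, e3, if_pos] at hv
      exact R₁.att_mem m h1 v hv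
    · have e0 : (3 * m + 1) % 3 = 1 := by omega
      have e3 : (3 * m + 1) / 3 = m := by omega
      simp only [e0, e3] at hv
      norm_num at hv
      exact R₁.att_mem m h1 v hv
    · have e0 : (3 * m + 2) % 3 = 2 := by omega
      have e3 : (3 * m + 2) / 3 = m := by omega
      simp only [e0, e3] at hv
      norm_num at hv
      rw [hc.hV]
      exact R₂.att_mem m h1 v hv
  wt := by
    intro e he
    rcases mem_conjE he with ⟨m, rfl, h1, h2⟩ | ⟨m, rfl, h1, h2⟩ | ⟨m, rfl, h1, h2⟩
    · have e0 : (3 * m) % 3 = 0 := by omega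
      have e3 : (3 * m) / 3 = m := by omega
      simp only [e0, e3, if_pos]
      exact R₁.wt m h1
    · have e0 : (3 * m + 1) % 3 = 1 := by omega
      have e3 : (3 * m + 1) / 3 = m := by omega
      simp only [e0, e3]
      norm_num
      exact R₁.wt m h1
    · have e0 : (3 * m + 2) % 3 = 2 := by omega
      have e3 : (3 * m + 2) / 3 = m := by omega
      simp only [e0, e3]
      norm_num
      have : (R₂.att m).map R₁.labV = (R₂.att m).map R₂.labV := by
        refine List.map_congr_left (fun v hv => ?_)
        have hv2 : v ∈ R₂.V := R₂.att_mem m h1 v hv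
        exact hc.hlabV v (by rw [hc.hV]; exact hv2)
      rw [this]
      exact R₂.wt m h1
  ext_mem := R₁.ext_mem

/-- The conjunction of two FGGs over the same labels and domains. -/
noncomputable def FGG.conj {W : Type} (G₁ G₂ : FGG LV LE htype W) :
    FGG LV (CLab LE) (chtype htype) W where
  N := Sum.inr '' (G₁.N ×ˢ G₂.N)
  T := (fun t => Sum.inl (Sum.inl t)) '' G₁.T ∪ (fun t => Sum.inl (Sum.inr t)) '' G₂.T
  finN := ((G₁.finN.prod G₂.finN).image _)
  finT := (G₁.finT.image _).union (G₂.finT.image _)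
  disj := by
    rw [Set.disjoint_left]
    rintro x ⟨p, _, rfl⟩ hx
    rcases hx with ⟨t, _, h⟩ | ⟨t, _, h⟩ <;> exact absurd h (by simp)
  P := {p : G₁.P × G₂.P //
    htype (G₁.lhs p.1) = htype (G₂.lhs p.2) ∧
    Conjoinable G₁.N G₂.N (G₁.rhs p.1) (G₂.rhs p.2)}
  finP := by
    haveI := G₁.finP
    haveI := G₂.finP
    infer_instance
  lhs p := Sum.inr (G₁.lhs p.1.1, G₂.lhs p.1.2)
  lhs_mem p := ⟨(G₁.lhs p.1.1, G₂.lhs p.1.2),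
    Set.mem_prod.2 ⟨G₁.lhs_mem _, G₂.lhs_mem _⟩, rfl⟩
  rhs p := conjFrag G₁.N G₂.N (G₁.rhs p.1.1) (G₂.rhs p.1.2) p.2.2
  rhs_lab := by
    intro p e he
    rcases mem_conjE he with ⟨m, rfl, h1, h2⟩ | ⟨m, rfl, h1, h2⟩ | ⟨m, rfl, h1, h2⟩
    · have e0 : (3 * m) % 3 = 0 := by omega
      have e3 : (3 * m) / 3 = m := by omega
      simp only [conjFrag, e0, e3, if_pos]
      left
      refine ⟨((G₁.rhs p.1.1).labE m, (G₂.rhs p.1.2).labE m), Set.mem_prod.2 ⟨h2, ?_⟩, rfl⟩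
      exact ((p.2.2.hNT m).1 ⟨h1, h2⟩).2
    · have e0 : (3 * m + 1) % 3 = 1 := by omega
      have e3 : (3 * m + 1) / 3 = m := by omega
      simp only [conjFrag, e0, e3]
      norm_num
      right; left
      refine ⟨(G₁.rhs p.1.1).labE m, ?_, rfl⟩
      rcases G₁.rhs_lab p.1.1 m h1 with h | h
      · exact absurd h h2
      · exact h
    · have e0 : (3 * m + 2) % 3 = 2 := by omega
      have e3 : (3 * m + 2) / 3 = m := by omega
      simp only [conjFrag, e0, e3]
      norm_num
      right; right
      refine ⟨(G₂.rhs p.1.2).labE m, ?_, rfl⟩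
      rcases G₂.rhs_lab p.1.2 m h1 with h | h
      · exact absurd h h2
      · exact h
  rhs_ext p := by
    simp only [conjFrag]
    exact G₁.rhs_ext p.1.1
  S := Sum.inr (G₁.S, G₂.S)
  S_mem := ⟨(G₁.S, G₂.S), Set.mem_prod.2 ⟨G₁.S_mem, G₂.S_mem⟩, rfl⟩
  S_type := G₁.S_type
  Ω := G₁.Ω
  F := fun ℓ l =>
    match ℓ with
    | .inl (.inl t) => G₁.F t l
    | .inl (.inr t) => G₂.F t l
    | .inr _ => 0

/-- The (reflexive) subtree relation on derivation trees. -/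
inductive Deriv.Subtree {G : HRG LV LE htype} :
    ∀ {X Y : LE}, Deriv G X → Deriv G Y → Prop
  | refl {X : LE} (D : Deriv G X) : Deriv.Subtree D D
  | step {X : LE} {D : Deriv G X} (π : G.P)
      (c : ∀ e, e ∈ (G.rhs π).E → (G.rhs π).labE e ∈ G.N →
        Deriv G ((G.rhs π).labE e))
      (e : ℕ) (he : e ∈ (G.rhs π).E) (hn : (G.rhs π).labE e ∈ G.N) :
      Deriv.Subtree D (c e he hn) → Deriv.Subtree D (Deriv.node π c)

/-- The proper (strict) subtree relation on derivation trees. -/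
inductive Deriv.StrictSubtree {G : HRG LV LE htype} :
    ∀ {X Y : LE}, Deriv G X → Deriv G Y → Prop
  | step {X : LE} {D : Deriv G X} (π : G.P)
      (c : ∀ e, e ∈ (G.rhs π).E → (G.rhs π).labE e ∈ G.N →
        Deriv G ((G.rhs π).labE e))
      (e : ℕ) (he : e ∈ (G.rhs π).E) (hn : (G.rhs π).labE e ∈ G.N) :
      Deriv.Subtree D (c e he hn) → Deriv.StrictSubtree D (Deriv.node π c)

/-- An HRG is recursive if some `X`-type derivation tree contains a proper
subtree that is also an `X`-type derivation tree. -/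
def HRG.Recursive (G : HRG LV LE htype) : Prop :=
  ∃ (X : LE) (D D' : Deriv G X), Deriv.StrictSubtree D D'

/-! ### Auxiliary material for Statement 13 -/

/-- Projection of a conjunction edge label onto the second component. -/
def projLab {LE : Type} : CLab LE → LE := fun ℓ =>
  match ℓ with
  | .inl (.inl t) => t
  | .inl (.inr t) => t
  | .inr p => p.2

/-- Transport a derivation along an equality of labels. -/
def Deriv.castLab {G : HRG LV LE htype} {X Y : LE} (h : X = Y) (D : Deriv G X) :
    Deriv G Y := h ▸ D

theorem conjFrag_labE_mul3 {N₁ N₂ : Set LE} {R₁ R₂ : Fragment LV LE htype}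
    (hc : Conjoinable N₁ N₂ R₁ R₂) (m : ℕ) :
    (conjFrag N₁ N₂ R₁ R₂ hc).labE (3 * m) = Sum.inr (R₁.labE m, R₂.labE m) := by
  have e0 : (3 * m) % 3 = 0 := by omega
  have e3 : (3 * m) / 3 = m := by omega
  simp [conjFrag, e0, e3]
  rfl

theorem conjFrag_labE_mul3_add1 {N₁ N₂ : Set LE} {R₁ R₂ : Fragment LV LE htype}
    (hc : Conjoinable N₁ N₂ R₁ R₂) (m : ℕ) :
    (conjFrag N₁ N₂ R₁ R₂ hc).labE (3 * m + 1) = Sum.inl (Sum.inl (R₁.labE m)) := by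
  have e0 : (3 * m + 1) % 3 = 1 := by omega
  have e3 : (3 * m + 1) / 3 = m := by omega
  simp [conjFrag, e0, e3]
  rfl

theorem conjFrag_labE_mul3_add2 {N₁ N₂ : Set LE} {R₁ R₂ : Fragment LV LE htype}
    (hc : Conjoinable N₁ N₂ R₁ R₂) (m : ℕ) :
    (conjFrag N₁ N₂ R₁ R₂ hc).labE (3 * m + 2) = Sum.inl (Sum.inr (R₂.labE m)) := by
  have e0 : (3 * m + 2) % 3 = 2 := by omega
  have e3 : (3 * m + 2) / 3 = m := by omega
  simp [conjFrag, e0, e3]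
  rfl

theorem mul3_mem_conjE {N₁ N₂ : Set LE} {R₁ R₂ : Fragment LV LE htype} {m : ℕ}
    (h1 : m ∈ R₁.E) (h2 : R₁.labE m ∈ N₁) : 3 * m ∈ conjE N₁ N₂ R₁ R₂ := by
  simp only [conjE, Finset.mem_union, Finset.mem_image, Finset.mem_filter]
  exact Or.inl (Or.inl ⟨m, ⟨h1, h2⟩, rfl⟩)

/-- Projection of a derivation of the conjunction onto a derivation of `G₂`. -/
noncomputable def projD (G₁ G₂ : FGG LV LE htype W) :
    ∀ {X : CLab LE}, Deriv (G₁.conj G₂).toHRG X → Deriv G₂.toHRG (projLab X)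
  | _, .node π c =>
      Deriv.node π.1.2 (fun e he hn =>
        have h1 : e ∈ (G₁.rhs π.1.1).E ∧ (G₁.rhs π.1.1).labE e ∈ G₁.N :=
          (π.2.2.hNT e).2 ⟨he, hn⟩
        have hlab : (((G₁.conj G₂)).rhs π).labE (3 * e) =
            Sum.inr ((G₁.rhs π.1.1).labE e, (G₂.rhs π.1.2).labE e) :=
          conjFrag_labE_mul3 π.2.2 e
        have hce : 3 * e ∈ (((G₁.conj G₂)).rhs π).E := mul3_mem_conjE h1.1 h1.2
        have hcn : (((G₁.conj G₂)).rhs π).labE (3 * e) ∈ ((G₁.conj G₂)).N := by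
          rw [hlab]; exact ⟨_, ⟨h1.2, hn⟩, rfl⟩
        Deriv.castLab (show projLab ((((G₁.conj G₂)).rhs π).labE (3 * e)) =
            (G₂.rhs π.1.2).labE e by rw [hlab]; rfl)
          (projD G₁ G₂ (c (3 * e) hce hcn)))

theorem Deriv.Subtree.castLab {G : HRG LV LE htype} {X Y Z : LE}
    {D : Deriv G X} {D' : Deriv G Y} (h : Y = Z) (hs : Deriv.Subtree D D') :
    Deriv.Subtree D (D'.castLab h) := by
  subst h; exact hs

theorem projD_subtree (G₁ G₂ : FGG LV LE htype W) {X Y : CLab LE}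
    {D : Deriv (G₁.conj G₂).toHRG X} {D' : Deriv (G₁.conj G₂).toHRG Y}
    (h : Deriv.Subtree D D') :
    Deriv.Subtree (projD G₁ G₂ D) (projD G₁ G₂ D') := by
  induction h with
  | refl => exact .refl _
  | step π c e he hn hsub ih =>
      rcases mem_conjE he with ⟨m, rfl, h1, h2⟩ | ⟨m, rfl, h1, h2⟩ | ⟨m, rfl, h1, h2⟩
      · have hm2 : m ∈ (G₂.rhs π.1.2).E ∧ (G₂.rhs π.1.2).labE m ∈ G₂.N :=
          (π.2.2.hNT m).1 ⟨h1, h2⟩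
        exact Deriv.Subtree.step π.1.2 _ m hm2.1 hm2.2 (Deriv.Subtree.castLab _ ih)
      · exfalso
        rw [show (((G₁.conj G₂)).rhs π).labE (3 * m + 1) =
            Sum.inl (Sum.inl ((G₁.rhs π.1.1).labE m)) from
          conjFrag_labE_mul3_add1 π.2.2 m] at hn
        rcases hn with ⟨q, _, hq⟩; exact absurd hq (by simp)
      · exfalso
        rw [show (((G₁.conj G₂)).rhs π).labE (3 * m + 2) =
            Sum.inl (Sum.inr ((G₂.rhs π.1.2).labE m)) from
          conjFrag_labE_mul3_add2 π.2.2 m] at hn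
        rcases hn with ⟨q, _, hq⟩; exact absurd hq (by simp)

theorem projD_strict (G₁ G₂ : FGG LV LE htype W) {X Y : CLab LE}
    {D : Deriv (G₁.conj G₂).toHRG X} {D' : Deriv (G₁.conj G₂).toHRG Y}
    (h : Deriv.StrictSubtree D D') :
    Deriv.StrictSubtree (projD G₁ G₂ D) (projD G₁ G₂ D') := by
  cases h with
  | step π c e he hn hsub =>
      rcases mem_conjE he with ⟨m, rfl, h1, h2⟩ | ⟨m, rfl, h1, h2⟩ | ⟨m, rfl, h1, h2⟩
      · have hm2 : m ∈ (G₂.rhs π.1.2).E ∧ (G₂.rhs π.1.2).labE m ∈ G₂.N :=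
          (π.2.2.hNT m).1 ⟨h1, h2⟩
        exact Deriv.StrictSubtree.step π.1.2 _ m hm2.1 hm2.2
          (Deriv.Subtree.castLab _ (projD_subtree G₁ G₂ hsub))
      · exfalso
        rw [show (((G₁.conj G₂)).rhs π).labE (3 * m + 1) =
            Sum.inl (Sum.inl ((G₁.rhs π.1.1).labE m)) from
          conjFrag_labE_mul3_add1 π.2.2 m] at hn
        rcases hn with ⟨q, _, hq⟩; exact absurd hq (by simp)
      · exfalso
        rw [show (((G₁.conj G₂)).rhs π).labE (3 * m + 2) =
            Sum.inl (Sum.inr ((G₂.rhs π.1.2).labE m)) from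
          conjFrag_labE_mul3_add2 π.2.2 m] at hn
        rcases hn with ⟨q, _, hq⟩; exact absurd hq (by simp)

/-- If `G₂` is nonrecursive, then the conjunction
`G₁ ⊓ G₂` is nonrecursive. -/
theorem statement13 {LV LE W : Type} {htype : LE → List LV}
    (G₁ G₂ : FGG LV LE htype W) (h : ¬ G₂.Recursive) :
    ¬ (G₁.conj G₂).Recursive := by
  rintro ⟨X, D, D', hs⟩
  exact h ⟨projLab X, projD G₁ G₂ D, projD G₁ G₂ D', projD_strict G₁ G₂ hs⟩
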